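/- Let W ⊆ ℝⁿ be a linear subspace with dim(W) ≤ (1−δ)n for some δ > 0, and let a > 0 and η > 1 satisfy 1/η + a ≤ δ. Then there exists a real symmetric positive semidefinite n×n matrix U such that: (i) wᵀUw = 0 for all w ∈ W; (ii) U_{ii} ≤ 1 for all i ∈ [n]; (iii) Tr(U) ≥ a·n; and (iv) η·diag(U) − U is positive semidefinite, where diag(U) is the diagonal matrix with entries U_{ii}. -/

import Mathlib

open Matrix Filter Finset Topology

namespace Subiso

variable {n k : ℕ}

lemma dp_swap {m : ℕ} (M : Matrix (Fin m) (Fin m) ℝ) (hs : Mᵀ = M) (u v : Fin m → ℝ) :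
    u ⬝ᵥ (M *ᵥ v) = v ⬝ᵥ (M *ᵥ u) := by
  have h1 : u ᵥ* M = M *ᵥ u := by
    conv_lhs => rw [← hs]
    rw [vecMul_transpose]
  rw [dotProduct_mulVec, h1, dotProduct_comm]

/-- the regularized Gram matrix -/
noncomputable def Sm (A : Matrix (Fin n) (Fin k) ℝ) (ε : ℝ) (d : Fin n → ℝ) :
    Matrix (Fin k) (Fin k) ℝ :=
  Aᵀ * Matrix.diagonal d * A + ε • 1

variable (A : Matrix (Fin n) (Fin k) ℝ) (ε : ℝ) (d : Fin n → ℝ)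

lemma Sm_symm : (Sm A ε d)ᵀ = Sm A ε d := by
  unfold Sm
  rw [transpose_add, transpose_smul, transpose_one, transpose_mul, transpose_mul,
    transpose_transpose, diagonal_transpose, Matrix.mul_assoc]

lemma Sm_quad (x : Fin k → ℝ) :
    x ⬝ᵥ (Sm A ε d *ᵥ x) = (∑ i, d i * ((A *ᵥ x) i) ^ 2) + ε * (x ⬝ᵥ x) := by
  unfold Sm
  rw [add_mulVec, dotProduct_add, smul_mulVec, one_mulVec, dotProduct_smul, smul_eq_mul]
  congr 1
  rw [← mulVec_mulVec, ← mulVec_mulVec, dotProduct_mulVec, vecMul_transpose]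
  simp only [dotProduct, mulVec_diagonal]
  exact Finset.sum_congr rfl fun i _ => by ring

lemma Sm_quad_nonneg (hε : 0 < ε) (hd : ∀ i, 0 ≤ d i) (x : Fin k → ℝ) :
    0 ≤ x ⬝ᵥ (Sm A ε d *ᵥ x) := by
  rw [Sm_quad]
  have h1 : 0 ≤ ∑ i, d i * ((A *ᵥ x) i) ^ 2 :=
    Finset.sum_nonneg fun i _ => mul_nonneg (hd i) (sq_nonneg _)
  have h2 : 0 ≤ x ⬝ᵥ x := Finset.sum_nonneg fun i _ => mul_self_nonneg _
  nlinarith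

lemma Sm_det_isUnit (hε : 0 < ε) (hd : ∀ i, 0 ≤ d i) : IsUnit (Sm A ε d).det := by
  rw [isUnit_iff_ne_zero]
  intro h0
  obtain ⟨v, hv, hAv⟩ := (Matrix.exists_mulVec_eq_zero_iff).2 h0
  have h1 : v ⬝ᵥ (Sm A ε d *ᵥ v) = 0 := by rw [hAv, dotProduct_zero]
  rw [Sm_quad] at h1
  have h2 : 0 ≤ ∑ i, d i * ((A *ᵥ v) i) ^ 2 :=
    Finset.sum_nonneg fun i _ => mul_nonneg (hd i) (sq_nonneg _)
  have h3 : 0 < v ⬝ᵥ v := by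
    rcases (Finset.sum_nonneg (fun i (_ : i ∈ Finset.univ) => mul_self_nonneg (v i))).lt_or_eq with h | h
    · exact h
    · exact absurd (dotProduct_self_eq_zero.1 h.symm) hv
  nlinarith

lemma T_mul_Sm (hε : 0 < ε) (hd : ∀ i, 0 ≤ d i) : (Sm A ε d)⁻¹ * Sm A ε d = 1 :=
  Matrix.nonsing_inv_mul _ (Sm_det_isUnit A ε d hε hd)

lemma Sm_mul_T (hε : 0 < ε) (hd : ∀ i, 0 ≤ d i) : Sm A ε d * (Sm A ε d)⁻¹ = 1 :=
  Matrix.mul_nonsing_inv _ (Sm_det_isUnit A ε d hε hd)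

lemma T_symm : ((Sm A ε d)⁻¹)ᵀ = (Sm A ε d)⁻¹ := by
  rw [Matrix.transpose_nonsing_inv, Sm_symm]

lemma Sm_mulVec_T (hε : 0 < ε) (hd : ∀ i, 0 ≤ d i) (y : Fin k → ℝ) :
    Sm A ε d *ᵥ ((Sm A ε d)⁻¹ *ᵥ y) = y := by
  rw [mulVec_mulVec, Sm_mul_T A ε d hε hd, one_mulVec]

lemma T_mulVec_Sm (hε : 0 < ε) (hd : ∀ i, 0 ≤ d i) (y : Fin k → ℝ) :
    (Sm A ε d)⁻¹ *ᵥ (Sm A ε d *ᵥ y) = y := by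
  rw [mulVec_mulVec, T_mul_Sm A ε d hε hd, one_mulVec]

lemma T_quad_eq (hε : 0 < ε) (hd : ∀ i, 0 ≤ d i) (y : Fin k → ℝ) :
    y ⬝ᵥ ((Sm A ε d)⁻¹ *ᵥ y)
      = ((Sm A ε d)⁻¹ *ᵥ y) ⬝ᵥ (Sm A ε d *ᵥ ((Sm A ε d)⁻¹ *ᵥ y)) := by
  rw [Sm_mulVec_T A ε d hε hd, dotProduct_comm]

lemma T_quad_nonneg (hε : 0 < ε) (hd : ∀ i, 0 ≤ d i) (y : Fin k → ℝ) :
    0 ≤ y ⬝ᵥ ((Sm A ε d)⁻¹ *ᵥ y) := by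
  rw [T_quad_eq A ε d hε hd]
  exact Sm_quad_nonneg A ε d hε hd _

lemma MA_apply (p q : Fin k) :
    (Aᵀ * Matrix.diagonal d * A) p q = ∑ j, d j * (A j p * A j q) := by
  rw [Matrix.mul_assoc, Matrix.mul_apply]
  refine Finset.sum_congr rfl fun j _ => ?_
  rw [Matrix.mul_apply]
  rw [Finset.sum_eq_single j (fun b _ hb => by simp [Matrix.diagonal_apply_ne' d hb]) (by simp)]
  simp [Matrix.transpose_apply, Matrix.diagonal_apply_eq]
  ring

lemma Sm_decomp (i : Fin n) :
    Sm A ε d = Sm A ε (Function.update d i 0) + (d i) • vecMulVec (A i) (A i) := by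
  unfold Sm
  ext p q
  simp only [Matrix.add_apply, Matrix.smul_apply, vecMulVec_apply, smul_eq_mul]
  have h1 := MA_apply A d p q
  have h2 := MA_apply A (Function.update d i 0) p q
  rw [h1, h2]
  have hsplit : ∀ e : Fin n → ℝ, ∑ j, e j * (A j p * A j q)
      = e i * (A i p * A i q) + ∑ j ∈ Finset.univ.erase i, e j * (A j p * A j q) :=
    fun e => (Finset.add_sum_erase _ _ (Finset.mem_univ i)).symm
  rw [hsplit d, hsplit (Function.update d i 0)]
  have h3 : ∑ j ∈ Finset.univ.erase i, (Function.update d i 0) j * (A j p * A j q)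
      = ∑ j ∈ Finset.univ.erase i, d j * (A j p * A j q) :=
    Finset.sum_congr rfl fun j hj => by
      rw [Function.update_apply, if_neg (Finset.mem_erase.1 hj).1]
  rw [h3, Function.update_self]
  ring

lemma update_nonneg (hd : ∀ j, 0 ≤ d j) (i : Fin n) : ∀ j, 0 ≤ Function.update d i 0 j := by
  intro j
  rw [Function.update_apply]
  split
  · exact le_refl 0
  · exact hd j

lemma vecMulVec_mulVec (a b x : Fin n → ℝ) :
    vecMulVec a b *ᵥ x = (b ⬝ᵥ x) • a := by
  ext i
  simp only [vecMulVec_apply, mulVec, dotProduct, Pi.smul_apply, smul_eq_mul, Finset.sum_mul]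
  exact Finset.sum_congr rfl fun j _ => by ring

lemma quad_cs {m : ℕ} (M : Matrix (Fin m) (Fin m) ℝ) (hs : Mᵀ = M)
    (h0 : ∀ x, 0 ≤ x ⬝ᵥ (M *ᵥ x)) (u v : Fin m → ℝ) :
    (u ⬝ᵥ (M *ᵥ v)) ^ 2 ≤ (u ⬝ᵥ (M *ᵥ u)) * (v ⬝ᵥ (M *ᵥ v)) := by
  have key : ∀ θ : ℝ, 0 ≤ (v ⬝ᵥ (M *ᵥ v)) * (θ * θ) + (2 * (u ⬝ᵥ (M *ᵥ v))) * θ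
      + (u ⬝ᵥ (M *ᵥ u)) := by
    intro θ
    have h := h0 (u + θ • v)
    have e1 : (u + θ • v) ⬝ᵥ (M *ᵥ (u + θ • v))
        = u ⬝ᵥ (M *ᵥ u) + θ * (u ⬝ᵥ (M *ᵥ v)) + (θ * (v ⬝ᵥ (M *ᵥ u))
          + θ * (θ * (v ⬝ᵥ (M *ᵥ v)))) := by
      rw [mulVec_add, mulVec_smul, dotProduct_add, add_dotProduct, add_dotProduct,
        dotProduct_smul, dotProduct_smul, smul_dotProduct, smul_dotProduct]
      simp [smul_eq_mul]
      ring
    rw [e1, dp_swap M hs v u] at h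
    nlinarith [h]
  have hd := discrim_le_zero key
  rw [discrim] at hd
  nlinarith [hd]

/-- leverage-type quantity with coordinate `i` removed -/
noncomputable def lbar (i : Fin n) (d : Fin n → ℝ) : ℝ :=
  A i ⬝ᵥ ((Sm A ε (Function.update d i 0))⁻¹ *ᵥ A i)

lemma lbar_nonneg (hε : 0 < ε) (hd : ∀ j, 0 ≤ d j) (i : Fin n) : 0 ≤ lbar A ε i d :=
  T_quad_nonneg A ε _ hε (update_nonneg d hd i) _

lemma T_mulVec_row (hε : 0 < ε) (hd : ∀ j, 0 ≤ d j) (i : Fin n) :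
    (Sm A ε d)⁻¹ *ᵥ (A i)
      = (1 + d i * lbar A ε i d)⁻¹ • ((Sm A ε (Function.update d i 0))⁻¹ *ᵥ (A i)) := by
  have hupd := update_nonneg d hd i
  set t := d i * lbar A ε i d with ht_def
  have ht0 : 0 ≤ t := mul_nonneg (hd i) (lbar_nonneg A ε d hε hd i)
  have h1t : (0:ℝ) < 1 + t := by linarith
  set x := (1 + t)⁻¹ • ((Sm A ε (Function.update d i 0))⁻¹ *ᵥ (A i)) with hx_def
  have hSx : Sm A ε d *ᵥ x = A i := by
    rw [Sm_decomp A ε d i, add_mulVec, smul_mulVec, hx_def, mulVec_smul,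
      Sm_mulVec_T A ε _ hε hupd, vecMulVec_mulVec, dotProduct_smul]
    have hdp : A i ⬝ᵥ ((Sm A ε (Function.update d i 0))⁻¹ *ᵥ A i) = lbar A ε i d := rfl
    rw [hdp]
    simp only [smul_eq_mul, smul_smul]
    rw [← add_smul]
    have hco : (1 + t)⁻¹ + d i * ((1 + t)⁻¹ * lbar A ε i d)
        = (1 + t)⁻¹ * (1 + d i * lbar A ε i d) := by ring
    rw [hco, ← ht_def, inv_mul_cancel₀ (ne_of_gt h1t), one_smul]
  calc (Sm A ε d)⁻¹ *ᵥ (A i) = (Sm A ε d)⁻¹ *ᵥ (Sm A ε d *ᵥ x) := by rw [hSx]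
    _ = x := T_mulVec_Sm A ε d hε hd x

lemma ell_eq (hε : 0 < ε) (hd : ∀ j, 0 ≤ d j) (i : Fin n) :
    A i ⬝ᵥ ((Sm A ε d)⁻¹ *ᵥ A i)
      = (1 + d i * lbar A ε i d)⁻¹ * lbar A ε i d := by
  rw [T_mulVec_row A ε d hε hd i, dotProduct_smul, smul_eq_mul]
  rfl

lemma lbar_antitone (hε : 0 < ε) {d d' : Fin n → ℝ} (hd : ∀ j, 0 ≤ d j)
    (hdd' : ∀ j, d j ≤ d' j) (i : Fin n) : lbar A ε i d' ≤ lbar A ε i d := by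
  have hd' : ∀ j, 0 ≤ d' j := fun j => le_trans (hd j) (hdd' j)
  set B := Sm A ε (Function.update d i 0) with hB
  set B' := Sm A ε (Function.update d' i 0) with hB'
  set a := A i with ha
  set u := B'⁻¹ *ᵥ a with hu
  set v := B⁻¹ *ᵥ a with hv
  have hupd := update_nonneg d hd i
  have hupd' := update_nonneg d' hd' i
  have hBv : B *ᵥ v = a := Sm_mulVec_T A ε _ hε hupd a
  have hB'u : B' *ᵥ u = a := Sm_mulVec_T A ε _ hε hupd' a
  have ht : lbar A ε i d' = u ⬝ᵥ (B' *ᵥ u) := by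
    rw [hB'u]
    exact dotProduct_comm a u
  have hL : lbar A ε i d = v ⬝ᵥ (B *ᵥ v) := by
    rw [hBv]
    exact dotProduct_comm a v
  have hquad_mono : u ⬝ᵥ (B *ᵥ u) ≤ u ⬝ᵥ (B' *ᵥ u) := by
    rw [hB, hB', Sm_quad, Sm_quad]
    have : ∀ j, Function.update d i 0 j ≤ Function.update d' i 0 j := by
      intro j
      rw [Function.update_apply, Function.update_apply]
      split
      · exact le_refl 0
      · exact hdd' j
    refine add_le_add (Finset.sum_le_sum fun j _ => ?_) le_rfl
    exact mul_le_mul_of_nonneg_right (this j) (sq_nonneg _)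
  have hcs := quad_cs B (Sm_symm A ε _) (Sm_quad_nonneg A ε _ hε hupd) u v
  have h1 : u ⬝ᵥ (B *ᵥ v) = lbar A ε i d' := by
    rw [hBv, ht, hB'u]
  have ht0 : 0 ≤ lbar A ε i d' := lbar_nonneg A ε d' hε hd' i
  have hL0 : 0 ≤ lbar A ε i d := lbar_nonneg A ε d hε hd i
  rcases ht0.lt_or_eq with htpos | hteq
  · have : (lbar A ε i d') ^ 2 ≤ (lbar A ε i d') * (lbar A ε i d) := by
      calc (lbar A ε i d') ^ 2 = (u ⬝ᵥ (B *ᵥ v)) ^ 2 := by rw [h1]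
        _ ≤ (u ⬝ᵥ (B *ᵥ u)) * (v ⬝ᵥ (B *ᵥ v)) := hcs
        _ ≤ (u ⬝ᵥ (B' *ᵥ u)) * (v ⬝ᵥ (B *ᵥ v)) := by
            have := Sm_quad_nonneg A ε _ hε hupd v
            exact mul_le_mul_of_nonneg_right hquad_mono this
        _ = (lbar A ε i d') * (lbar A ε i d) := by rw [← ht, ← hL]
    nlinarith
  · rw [← hteq]
    exact hL0

/-- the update map whose fixed points we need -/
noncomputable def phi (η : ℝ) (d : Fin n → ℝ) : Fin n → ℝ :=
  fun i => (η - 1) / max (lbar A ε i d) (η - 1)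

lemma phi_pos {η : ℝ} (hη : 1 < η) (d : Fin n → ℝ) (i : Fin n) : 0 < phi A ε η d i :=
  div_pos (by linarith) (lt_of_lt_of_le (by linarith) (le_max_right _ _))

lemma phi_le_one {η : ℝ} (hη : 1 < η) (d : Fin n → ℝ) (i : Fin n) : phi A ε η d i ≤ 1 :=
  (div_le_one (lt_of_lt_of_le (by linarith) (le_max_right _ _))).2 (le_max_right _ _)

lemma phi_mono {η : ℝ} (hη : 1 < η) (hε : 0 < ε) {d d' : Fin n → ℝ} (hd : ∀ j, 0 ≤ d j)
    (hdd' : ∀ j, d j ≤ d' j) (i : Fin n) : phi A ε η d i ≤ phi A ε η d' i := by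
  unfold phi
  have h1 : max (lbar A ε i d') (η - 1) ≤ max (lbar A ε i d) (η - 1) :=
    max_le_max (lbar_antitone A ε hε hd hdd' i) (le_refl _)
  have h2 : (0:ℝ) < max (lbar A ε i d') (η - 1) :=
    lt_of_lt_of_le (by linarith) (le_max_right _ _)
  exact div_le_div_of_nonneg_left (by linarith) h2 h1

lemma exists_fixed {η : ℝ} (hη : 1 < η) (hε : 0 < ε) :
    ∃ d : Fin n → ℝ, (∀ i, 0 < d i) ∧ (∀ i, d i ≤ 1) ∧
      ∀ i, d i = (η - 1) / max (lbar A ε i d) (η - 1) := by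
  set s : Set (Fin n → ℝ) :=
    {e | (∀ i, 0 ≤ e i ∧ e i ≤ 1) ∧ ∀ i, e i ≤ phi A ε η e i} with hs
  have h0s : (fun _ => (0:ℝ)) ∈ s :=
    ⟨fun i => ⟨le_refl _, zero_le_one⟩, fun i => le_of_lt (phi_pos A ε hη _ i)⟩
  have hbdd : ∀ i, BddAbove ((fun e => e i) '' s) := by
    intro i
    refine ⟨1, ?_⟩
    rintro _ ⟨e, he, rfl⟩
    exact (he.1 i).2
  have hne : ∀ i, ((fun e => e i) '' s).Nonempty := fun i => ⟨0, ⟨_, h0s, rfl⟩⟩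
  set g : Fin n → ℝ := fun i => sSup ((fun e => e i) '' s) with hg
  have hle : ∀ e ∈ s, ∀ i, e i ≤ g i := fun e he i => le_csSup (hbdd i) ⟨e, he, rfl⟩
  have hg0 : ∀ i, 0 ≤ g i := fun i => hle _ h0s i
  have hg1 : ∀ i, g i ≤ 1 := by
    intro i
    refine csSup_le (hne i) ?_
    rintro _ ⟨e, he, rfl⟩
    exact (he.1 i).2
  have hgphi : ∀ i, g i ≤ phi A ε η g i := by
    intro i
    refine csSup_le (hne i) ?_
    rintro _ ⟨e, he, rfl⟩
    exact (he.2 i).trans (phi_mono A ε hη hε (fun j => (he.1 j).1) (fun j => hle e he j) i)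
  have hphis : phi A ε η g ∈ s := by
    refine ⟨fun i => ⟨le_of_lt (phi_pos A ε hη _ i), phi_le_one A ε hη _ i⟩, fun i => ?_⟩
    exact phi_mono A ε hη hε hg0 hgphi i
  have hfix : ∀ i, g i = phi A ε η g i :=
    fun i => le_antisymm (hgphi i) (hle _ hphis i)
  exact ⟨g, fun i => hfix i ▸ phi_pos A ε hη g i, hg1, hfix⟩

/-- the candidate matrix -/
noncomputable def Umat (d : Fin n → ℝ) : Matrix (Fin n) (Fin n) ℝ :=
  Matrix.diagonal d
    - Matrix.diagonal d * (A * (Sm A ε d)⁻¹ * Aᵀ) * Matrix.diagonal d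

/-- leverage scores -/
noncomputable def Qv (d : Fin n → ℝ) : Fin n → ℝ :=
  fun i => d i * (A i ⬝ᵥ ((Sm A ε d)⁻¹ *ᵥ A i))

lemma Umat_symm : (Umat A ε d)ᵀ = Umat A ε d := by
  unfold Umat
  rw [transpose_sub, diagonal_transpose, transpose_mul, transpose_mul, transpose_mul,
    transpose_mul, transpose_transpose, diagonal_transpose, T_symm]
  simp only [Matrix.mul_assoc]

lemma ATA_diag (i : Fin n) :
    (A * (Sm A ε d)⁻¹ * Aᵀ) i i = A i ⬝ᵥ ((Sm A ε d)⁻¹ *ᵥ A i) := by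
  rw [Matrix.mul_assoc, Matrix.mul_apply]
  simp only [dotProduct, mulVec, Matrix.mul_apply, transpose_apply, dotProduct]

lemma Umat_diag (i : Fin n) : Umat A ε d i i = d i * (1 - Qv A ε d i) := by
  unfold Umat Qv
  rw [Matrix.sub_apply, Matrix.mul_diagonal, Matrix.diagonal_mul, Matrix.diagonal_apply_eq,
    ATA_diag]
  ring

lemma diag_dp (x w : Fin n → ℝ) :
    x ⬝ᵥ (Matrix.diagonal d *ᵥ w) = (fun i => d i * x i) ⬝ᵥ w := by
  simp only [dotProduct, mulVec_diagonal]
  exact Finset.sum_congr rfl fun i _ => by ring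

lemma Umat_quad (x : Fin n → ℝ) :
    x ⬝ᵥ (Umat A ε d *ᵥ x)
      = (∑ i, d i * x i ^ 2)
        - (Aᵀ *ᵥ (fun i => d i * x i)) ⬝ᵥ ((Sm A ε d)⁻¹ *ᵥ (Aᵀ *ᵥ (fun i => d i * x i))) := by
  unfold Umat
  rw [sub_mulVec, dotProduct_sub]
  congr 1
  · simp only [dotProduct, mulVec_diagonal]
    exact Finset.sum_congr rfl fun i _ => by ring
  · rw [← mulVec_mulVec, ← mulVec_mulVec, diag_dp]
    have hDx : Matrix.diagonal d *ᵥ x = fun i => d i * x i := by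
      ext i
      rw [mulVec_diagonal]
    rw [hDx, ← mulVec_mulVec, ← mulVec_mulVec, dotProduct_mulVec, ← mulVec_transpose]

lemma Qv_nonneg (hε : 0 < ε) (hd : ∀ j, 0 ≤ d j) (i : Fin n) : 0 ≤ Qv A ε d i :=
  mul_nonneg (hd i) (T_quad_nonneg A ε d hε hd _)

lemma Umat_psd (hε : 0 < ε) (hd : ∀ j, 0 ≤ d j) (x : Fin n → ℝ) :
    0 ≤ x ⬝ᵥ (Umat A ε d *ᵥ x) := by
  rw [Umat_quad]
  set z : Fin n → ℝ := fun i => d i * x i with hz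
  set y : Fin k → ℝ := Aᵀ *ᵥ z with hy
  set T : Matrix (Fin k) (Fin k) ℝ := (Sm A ε d)⁻¹ with hT
  set u : Fin k → ℝ := T *ᵥ y with hu
  have hSu : Sm A ε d *ᵥ u = y := Sm_mulVec_T A ε d hε hd y
  have htt0 : 0 ≤ y ⬝ᵥ (T *ᵥ y) := T_quad_nonneg A ε d hε hd y
  have htt1 : y ⬝ᵥ (T *ᵥ y) = u ⬝ᵥ (Sm A ε d *ᵥ u) := by
    rw [hSu, ← hu, dotProduct_comm]
  have htt2 : y ⬝ᵥ (T *ᵥ y) = ∑ i, d i * ((A *ᵥ u) i) * x i := by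
    have e1 : y ⬝ᵥ (T *ᵥ y) = u ⬝ᵥ y := by rw [← hu, dotProduct_comm]
    rw [e1, hy, dotProduct_mulVec, ← mulVec_transpose, transpose_transpose]
    simp only [dotProduct, hz]
    exact Finset.sum_congr rfl fun i _ => by ring
  have hsum_le : ∑ i, d i * ((A *ᵥ u) i) ^ 2 ≤ y ⬝ᵥ (T *ᵥ y) := by
    rw [htt1, Sm_quad]
    have : 0 ≤ x ⬝ᵥ x → True := fun _ => trivial
    have h2 : 0 ≤ u ⬝ᵥ u := Finset.sum_nonneg fun i _ => mul_self_nonneg _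
    nlinarith
  have hcs : (y ⬝ᵥ (T *ᵥ y)) ^ 2
      ≤ (∑ i, d i * ((A *ᵥ u) i) ^ 2) * (∑ i, d i * x i ^ 2) := by
    have := Finset.sum_mul_sq_le_sq_mul_sq Finset.univ
      (fun i => Real.sqrt (d i) * ((A *ᵥ u) i)) (fun i => Real.sqrt (d i) * x i)
    have e2 : ∀ i, (Real.sqrt (d i) * ((A *ᵥ u) i)) * (Real.sqrt (d i) * x i)
        = d i * ((A *ᵥ u) i) * x i := by
      intro i
      have h := Real.mul_self_sqrt (hd i)
      rw [show (Real.sqrt (d i) * ((A *ᵥ u) i)) * (Real.sqrt (d i) * x i)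
        = (Real.sqrt (d i) * Real.sqrt (d i)) * (((A *ᵥ u) i) * x i) from by ring, h]
      ring
    have e3 : ∀ i, (Real.sqrt (d i) * ((A *ᵥ u) i)) ^ 2 = d i * ((A *ᵥ u) i) ^ 2 := by
      intro i
      rw [mul_pow, Real.sq_sqrt (hd i)]
    have e4 : ∀ i, (Real.sqrt (d i) * x i) ^ 2 = d i * x i ^ 2 := by
      intro i
      rw [mul_pow, Real.sq_sqrt (hd i)]
    calc (y ⬝ᵥ (T *ᵥ y)) ^ 2 = (∑ i, (Real.sqrt (d i) * ((A *ᵥ u) i)) * (Real.sqrt (d i) * x i)) ^ 2 := by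
          rw [htt2]
          congr 1
          exact (Finset.sum_congr rfl fun i _ => e2 i).symm
      _ ≤ (∑ i, (Real.sqrt (d i) * ((A *ᵥ u) i)) ^ 2) * (∑ i, (Real.sqrt (d i) * x i) ^ 2) := this
      _ = (∑ i, d i * ((A *ᵥ u) i) ^ 2) * (∑ i, d i * x i ^ 2) := by
          rw [Finset.sum_congr rfl fun i _ => e3 i, Finset.sum_congr rfl fun i _ => e4 i]
  have hdx0 : 0 ≤ ∑ i, d i * x i ^ 2 :=
    Finset.sum_nonneg fun i _ => mul_nonneg (hd i) (sq_nonneg _)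
  rcases htt0.lt_or_eq with hpos | heq
  · have h5 : 0 ≤ ∑ i, d i * ((A *ᵥ u) i) ^ 2 :=
      Finset.sum_nonneg fun i _ => mul_nonneg (hd i) (sq_nonneg _)
    nlinarith
  · rw [← heq]
    linarith

lemma Umat_quad_le_diagsum (hε : 0 < ε) (hd : ∀ j, 0 ≤ d j) (x : Fin n → ℝ) :
    x ⬝ᵥ (Umat A ε d *ᵥ x) ≤ ∑ i, d i * x i ^ 2 := by
  rw [Umat_quad]
  have := T_quad_nonneg A ε d hε hd (Aᵀ *ᵥ (fun i => d i * x i))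
  linarith

/-- trace identity: the sum of leverage scores is at most `k`. -/
lemma Qv_sum_le (hε : 0 < ε) (hd : ∀ j, 0 ≤ d j) : ∑ i, Qv A ε d i ≤ (k : ℝ) := by
  set T : Matrix (Fin k) (Fin k) ℝ := (Sm A ε d)⁻¹ with hT
  have e1 : ∑ i, Qv A ε d i = Matrix.trace (T * (Aᵀ * Matrix.diagonal d * A)) := by
    have rhs : Matrix.trace (T * (Aᵀ * Matrix.diagonal d * A))
        = ∑ p, ∑ q, T p q * ∑ i, d i * (A i q * A i p) := by
      rw [Matrix.trace]
      refine Finset.sum_congr rfl fun p _ => ?_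
      rw [Matrix.diag_apply, Matrix.mul_apply]
      exact Finset.sum_congr rfl fun q _ => by rw [MA_apply]
    have lhs : ∑ i, Qv A ε d i = ∑ i, ∑ p, ∑ q, d i * (A i p * (T p q * A i q)) := by
      unfold Qv
      simp only [dotProduct, mulVec, Finset.mul_sum]
      rfl
    rw [lhs, rhs, Finset.sum_comm]
    refine Finset.sum_congr rfl fun p _ => ?_
    rw [Finset.sum_comm]
    refine Finset.sum_congr rfl fun q _ => ?_
    rw [Finset.mul_sum]
    refine Finset.sum_congr rfl fun i _ => by ring
  have e2 : T * (Aᵀ * Matrix.diagonal d * A) = 1 - ε • T := by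
    have : Aᵀ * Matrix.diagonal d * A = Sm A ε d - ε • 1 := by
      unfold Sm
      exact (add_sub_cancel_right _ _).symm
    rw [this, Matrix.mul_sub, T_mul_Sm A ε d hε hd, Matrix.mul_smul, Matrix.mul_one]
  have e3 : Matrix.trace (1 - ε • T : Matrix (Fin k) (Fin k) ℝ) = (k : ℝ) - ε * Matrix.trace T := by
    rw [trace_sub, trace_smul, trace_one]
    simp [smul_eq_mul]
  have e4 : 0 ≤ Matrix.trace T := by
    rw [Matrix.trace]
    refine Finset.sum_nonneg fun p _ => ?_
    have h := T_quad_nonneg A ε d hε hd (Pi.single p 1)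
    have e5 : Pi.single p 1 ⬝ᵥ (T *ᵥ Pi.single p 1) = T p p := by
      rw [mulVec_single, single_dotProduct]
      simp
    rw [e5] at h
    exact h
  rw [e1, e2, e3]
  nlinarith

lemma Umat_ann (hε : 0 < ε) (hd : ∀ j, 0 ≤ d j) (v : Fin k → ℝ) :
    (A *ᵥ v) ⬝ᵥ (Umat A ε d *ᵥ (A *ᵥ v)) ≤ ε * (v ⬝ᵥ v) := by
  rw [Umat_quad]
  set w : Fin n → ℝ := A *ᵥ v with hw
  set z : Fin n → ℝ := fun i => d i * w i with hz
  set T : Matrix (Fin k) (Fin k) ℝ := (Sm A ε d)⁻¹ with hT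
  have hy : Aᵀ *ᵥ z = Sm A ε d *ᵥ v + (-ε) • v := by
    have e1 : Aᵀ *ᵥ z = (Aᵀ * Matrix.diagonal d * A) *ᵥ v := by
      rw [hz]
      have : (fun i => d i * w i) = Matrix.diagonal d *ᵥ w := by
        ext i
        rw [mulVec_diagonal]
      rw [this, hw, mulVec_mulVec, mulVec_mulVec]
    have e2 : Sm A ε d *ᵥ v = (Aᵀ * Matrix.diagonal d * A) *ᵥ v + ε • v := by
      unfold Sm
      rw [add_mulVec, smul_mulVec, one_mulVec]
    rw [e1, e2]
    ext i
    simp [smul_eq_mul]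
  have hTy : T *ᵥ (Aᵀ *ᵥ z) = v + (-ε) • (T *ᵥ v) := by
    rw [hy, mulVec_add, T_mulVec_Sm A ε d hε hd, mulVec_smul]
  have hdsum : ∑ i, d i * w i ^ 2 = v ⬝ᵥ (Sm A ε d *ᵥ v) + (-ε) * (v ⬝ᵥ v) := by
    have e3 : ∑ i, d i * w i ^ 2 = z ⬝ᵥ (A *ᵥ v) := by
      simp only [dotProduct, hz, ← hw]
      exact Finset.sum_congr rfl fun i _ => by ring
    rw [e3, dotProduct_mulVec, ← mulVec_transpose, hy, add_dotProduct, smul_dotProduct,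
      dotProduct_comm _ v]
    simp [smul_eq_mul]
  have hexp : (Aᵀ *ᵥ z) ⬝ᵥ (T *ᵥ (Aᵀ *ᵥ z))
      = v ⬝ᵥ (Sm A ε d *ᵥ v) + (-ε) * (v ⬝ᵥ v) + ((-ε) * (v ⬝ᵥ v) + ε ^ 2 * (v ⬝ᵥ (T *ᵥ v))) := by
    rw [hTy, hy]
    rw [add_dotProduct, dotProduct_add, dotProduct_add, smul_dotProduct, smul_dotProduct,
      dotProduct_smul, dotProduct_smul]
    have c1 : (Sm A ε d *ᵥ v) ⬝ᵥ v = v ⬝ᵥ (Sm A ε d *ᵥ v) := dotProduct_comm _ _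
    have c2 : (Sm A ε d *ᵥ v) ⬝ᵥ (T *ᵥ v) = v ⬝ᵥ v := by
      rw [dotProduct_comm, dp_swap _ (Sm_symm A ε d), hT, Sm_mulVec_T A ε d hε hd]
    have c3 : v ⬝ᵥ (T *ᵥ v) = v ⬝ᵥ (T *ᵥ v) := rfl
    rw [c1, c2]
    simp only [smul_eq_mul]
    ring
  rw [hdsum, hexp]
  have h4 : 0 ≤ v ⬝ᵥ (T *ᵥ v) := T_quad_nonneg A ε d hε hd v
  nlinarith

lemma key {η : ℝ} (hη : 1 < η) (hε : 0 < ε) :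
    ∃ U : Matrix (Fin n) (Fin n) ℝ,
      Uᵀ = U ∧
      (∀ x, 0 ≤ x ⬝ᵥ (U *ᵥ x)) ∧
      (∀ i j, |U i j| ≤ 1) ∧
      (∀ i, 0 ≤ U i i ∧ U i i ≤ 1) ∧
      ((n : ℝ) - k * (η / (η - 1)) ≤ ∑ i, U i i) ∧
      (∀ x, x ⬝ᵥ (U *ᵥ x) ≤ η * ∑ i, U i i * x i ^ 2) ∧
      (∀ v : Fin k → ℝ, (A *ᵥ v) ⬝ᵥ (U *ᵥ (A *ᵥ v)) ≤ ε * (v ⬝ᵥ v)) := by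
  have hη0 : (0:ℝ) < η := by linarith
  have hη1 : (0:ℝ) < η - 1 := by linarith
  obtain ⟨d, hd0, hd1, hfix⟩ := exists_fixed A ε hη hε
  have hd0' : ∀ j, 0 ≤ d j := fun j => le_of_lt (hd0 j)
  set U := Umat A ε d with hU
  set lam : ℝ := (η - 1) / η with hlam
  have hlam_pos : 0 < lam := div_pos hη1 hη0
  have hlam_lt1 : lam < 1 := by
    rw [hlam, div_lt_one hη0]
    linarith
  -- leverage bounds from the fixed point
  have hQle : ∀ i, Qv A ε d i ≤ lam := by
    intro i
    have hlb0 : 0 ≤ lbar A ε i d := lbar_nonneg A ε d hε hd0' i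
    have ht0 : 0 ≤ d i * lbar A ε i d := mul_nonneg (hd0' i) hlb0
    have ht_le : d i * lbar A ε i d ≤ η - 1 := by
      have hmax : (0:ℝ) < max (lbar A ε i d) (η - 1) :=
        lt_of_lt_of_le hη1 (le_max_right _ _)
      have := hfix i
      calc d i * lbar A ε i d = (η - 1) / max (lbar A ε i d) (η - 1) * lbar A ε i d := by
            rw [← this]
        _ = (η - 1) * (lbar A ε i d / max (lbar A ε i d) (η - 1)) := by ring
        _ ≤ (η - 1) * 1 := by
            refine mul_le_mul_of_nonneg_left ?_ (le_of_lt hη1)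
            exact (div_le_one hmax).2 (le_max_left _ _)
        _ = η - 1 := mul_one _
    have hQ : Qv A ε d i = (d i * lbar A ε i d) / (1 + d i * lbar A ε i d) := by
      unfold Qv
      rw [ell_eq A ε d hε hd0' i]
      field_simp
    rw [hQ, hlam]
    rw [div_le_div_iff₀ (by linarith) hη0]
    nlinarith
  have hQ0 : ∀ i, 0 ≤ Qv A ε d i := Qv_nonneg A ε d hε hd0'
  have hQeq : ∀ i, d i < 1 → Qv A ε d i = lam := by
    intro i hi
    have hlb0 : 0 ≤ lbar A ε i d := lbar_nonneg A ε d hε hd0' i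
    have hcase : lbar A ε i d > η - 1 := by
      by_contra hcon
      push_neg at hcon
      have hmax : max (lbar A ε i d) (η - 1) = η - 1 := max_eq_right hcon
      have hd1' : d i = 1 := by rw [hfix i, hmax, div_self (ne_of_gt hη1)]
      linarith
    have hmax : max (lbar A ε i d) (η - 1) = lbar A ε i d := max_eq_left (le_of_lt hcase)
    have hlbpos : 0 < lbar A ε i d := lt_trans hη1 hcase
    have ht : d i * lbar A ε i d = η - 1 := by
      rw [hfix i, hmax, div_mul_cancel₀ _ (ne_of_gt hlbpos)]
    have hQ : Qv A ε d i = (d i * lbar A ε i d) / (1 + d i * lbar A ε i d) := by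
      unfold Qv
      rw [ell_eq A ε d hε hd0' i]
      field_simp
    rw [hQ, ht, hlam]
    congr 1
    ring
  -- diagonal bounds
  have hdiag : ∀ i, U i i = d i * (1 - Qv A ε d i) := fun i => Umat_diag A ε d i
  have hdiag_bounds : ∀ i, 0 ≤ U i i ∧ U i i ≤ 1 := by
    intro i
    rw [hdiag i]
    constructor
    · exact mul_nonneg (hd0' i) (by nlinarith [hQle i, hQ0 i])
    · nlinarith [hd1 i, hd0' i, hQ0 i, hQle i]
  have hpsd : ∀ x, 0 ≤ x ⬝ᵥ (U *ᵥ x) := Umat_psd A ε d hε hd0'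
  have hsymm : Uᵀ = U := Umat_symm A ε d
  -- entry bounds
  have hentry : ∀ i j, |U i j| ≤ 1 := by
    intro i j
    have hcs := quad_cs U hsymm hpsd (Pi.single i 1) (Pi.single j 1)
    have e1 : Pi.single i 1 ⬝ᵥ (U *ᵥ Pi.single j 1) = U i j := by
      rw [mulVec_single, single_dotProduct]
      simp
    have e2 : Pi.single i 1 ⬝ᵥ (U *ᵥ Pi.single i 1) = U i i := by
      rw [mulVec_single, single_dotProduct]
      simp
    have e3 : Pi.single j 1 ⬝ᵥ (U *ᵥ Pi.single j 1) = U j j := by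
      rw [mulVec_single, single_dotProduct]
      simp
    rw [e1, e2, e3] at hcs
    have h1 := (hdiag_bounds i).1
    have h2 := (hdiag_bounds i).2
    have h3 := (hdiag_bounds j).1
    have h4 := (hdiag_bounds j).2
    rw [abs_le]
    constructor <;> nlinarith [hcs]
  -- subisotropic quadratic bound
  have hsub : ∀ x, x ⬝ᵥ (U *ᵥ x) ≤ η * ∑ i, U i i * x i ^ 2 := by
    intro x
    have h1 : x ⬝ᵥ (U *ᵥ x) ≤ ∑ i, d i * x i ^ 2 :=
      Umat_quad_le_diagsum A ε d hε hd0' x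
    have h2 : ∑ i, d i * x i ^ 2 ≤ η * ∑ i, U i i * x i ^ 2 := by
      rw [Finset.mul_sum]
      refine Finset.sum_le_sum fun i _ => ?_
      rw [hdiag i]
      have : 1 ≤ η * (1 - Qv A ε d i) := by
        have := hQle i
        rw [hlam] at this
        have h3 : η * (1 - Qv A ε d i) ≥ η * (1 - (η-1)/η) := by nlinarith
        have h4 : η * (1 - (η-1)/η) = 1 := by field_simp; ring
        linarith
      nlinarith [mul_le_mul_of_nonneg_right this (mul_nonneg (hd0' i) (sq_nonneg (x i)))]
    linarith
  -- trace bound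
  have htrace : (n : ℝ) - k * (η / (η - 1)) ≤ ∑ i, U i i := by
    classical
    set G : Finset (Fin n) := Finset.univ.filter (fun i => (1:ℝ) ≤ d i) with hG
    set Gc : Finset (Fin n) := Finset.univ.filter (fun i => ¬ ((1:ℝ) ≤ d i)) with hGc
    have hcard : G.card + Gc.card = n := by
      rw [hG, hGc, Finset.card_filter_add_card_filter_not]
      simp
    have hQsum : ∑ i, Qv A ε d i ≤ (k:ℝ) := Qv_sum_le A ε d hε hd0'
    have hsplit : ∑ i ∈ G, Qv A ε d i + ∑ i ∈ Gc, Qv A ε d i = ∑ i, Qv A ε d i :=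
      Finset.sum_filter_add_sum_filter_not _ _ _
    have hGc_sum : ∑ i ∈ Gc, Qv A ε d i = lam * Gc.card := by
      rw [Finset.sum_congr rfl (fun i hi => hQeq i ?_), Finset.sum_const, nsmul_eq_mul, mul_comm]
      rw [hGc] at hi
      exact lt_of_not_ge (Finset.mem_filter.1 hi).2
    have hs0 : 0 ≤ ∑ i ∈ G, Qv A ε d i := Finset.sum_nonneg fun i _ => hQ0 i
    set s0 := ∑ i ∈ G, Qv A ε d i with hs0def
    set m := (Gc.card : ℝ) with hm
    have hm0 : 0 ≤ m := Nat.cast_nonneg _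
    have hlm : lam * m + s0 ≤ (k:ℝ) := by
      rw [hm]
      linarith [hsplit, hQsum, hGc_sum]
    -- lower bound the trace
    have htr1 : ∑ i, U i i = ∑ i ∈ G, U i i + ∑ i ∈ Gc, U i i :=
      (Finset.sum_filter_add_sum_filter_not _ _ _).symm
    have htr2 : ∑ i ∈ G, U i i = (G.card : ℝ) - s0 := by
      have e1 : ∑ i ∈ G, U i i = ∑ i ∈ G, (1 - Qv A ε d i) := by
        refine Finset.sum_congr rfl fun i hi => ?_
        have hdi : d i = 1 := le_antisymm (hd1 i) (Finset.mem_filter.1 hi).2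
        rw [hdiag i, hdi, one_mul]
      rw [e1, Finset.sum_sub_distrib, Finset.sum_const, nsmul_eq_mul, mul_one, hs0def]
    have htr3 : 0 ≤ ∑ i ∈ Gc, U i i := Finset.sum_nonneg fun i _ => (hdiag_bounds i).1
    have hcast : (G.card : ℝ) + m = (n : ℝ) := by
      rw [hm]
      exact_mod_cast congrArg (Nat.cast (R := ℝ)) hcard
    have hc1 : 1 ≤ η / (η - 1) := by
      rw [le_div_iff₀ hη1]
      linarith
    have hc0 : 0 ≤ η / (η - 1) := by linarith
    have hck : (η/(η-1)) * (lam * m + s0) ≤ (η/(η-1)) * k := mul_le_mul_of_nonneg_left hlm hc0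
    have hcl : (η/(η-1)) * lam = 1 := by
      rw [hlam]
      field_simp
    have hgoal : m + s0 ≤ (k:ℝ) * (η/(η-1)) := by
      nlinarith [mul_nonneg (sub_nonneg.2 hc1) hs0]
    linarith [htr1, htr2, htr3, hcast, hgoal]
  exact ⟨U, hsymm, hpsd, hentry, hdiag_bounds, htrace, hsub, Umat_ann A ε d hε hd0'⟩
lemma exists_U {η : ℝ} (hη : 1 < η) :
    ∃ U : Matrix (Fin n) (Fin n) ℝ,
      Uᵀ = U ∧
      (∀ x, 0 ≤ x ⬝ᵥ (U *ᵥ x)) ∧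
      (∀ i, U i i ≤ 1) ∧
      ((n : ℝ) - k * (η / (η - 1)) ≤ ∑ i, U i i) ∧
      (∀ x, x ⬝ᵥ (U *ᵥ x) ≤ η * ∑ i, U i i * x i ^ 2) ∧
      (∀ v : Fin k → ℝ, (A *ᵥ v) ⬝ᵥ (U *ᵥ (A *ᵥ v)) = 0) := by
  have hkey : ∀ m : ℕ, ∃ U : Matrix (Fin n) (Fin n) ℝ,
      Uᵀ = U ∧
      (∀ x, 0 ≤ x ⬝ᵥ (U *ᵥ x)) ∧
      (∀ i j, |U i j| ≤ 1) ∧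
      (∀ i, 0 ≤ U i i ∧ U i i ≤ 1) ∧
      ((n : ℝ) - k * (η / (η - 1)) ≤ ∑ i, U i i) ∧
      (∀ x, x ⬝ᵥ (U *ᵥ x) ≤ η * ∑ i, U i i * x i ^ 2) ∧
      (∀ v : Fin k → ℝ, (A *ᵥ v) ⬝ᵥ (U *ᵥ (A *ᵥ v)) ≤ (1/((m:ℝ)+1)) * (v ⬝ᵥ v)) := by
    intro m
    exact key A (1/((m:ℝ)+1)) hη (by positivity)
  choose Useq h1 h2 h3 h4 h5 h6 h7 using hkey
  set K : Set (Fin n → Fin n → ℝ) :=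
    Set.univ.pi fun _ => Set.univ.pi fun _ => Set.Icc (-1:ℝ) 1 with hKdef
  have hK : IsCompact K :=
    isCompact_univ_pi fun i => isCompact_univ_pi fun j => isCompact_Icc
  have hmem : ∀ m, (fun i j => Useq m i j) ∈ K := by
    intro m
    rw [hKdef]
    intro i _
    intro j _
    exact abs_le.1 (h3 m i j)
  obtain ⟨L, hLK, ψ, hψ, htend⟩ := hK.tendsto_subseq hmem
  have hent : ∀ i j, Tendsto (fun m => Useq (ψ m) i j) atTop (𝓝 (L i j)) := by
    intro i j
    have h := tendsto_pi_nhds.1 htend i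
    exact tendsto_pi_nhds.1 h j
  set U : Matrix (Fin n) (Fin n) ℝ := Matrix.of L with hUdef
  have hentU : ∀ i j, Tendsto (fun m => Useq (ψ m) i j) atTop (𝓝 (U i j)) := hent
  have hquadtend : ∀ x y : Fin n → ℝ,
      Tendsto (fun m => x ⬝ᵥ (Useq (ψ m) *ᵥ y)) atTop (𝓝 (x ⬝ᵥ (U *ᵥ y))) := by
    intro x y
    have e : ∀ M : Matrix (Fin n) (Fin n) ℝ, x ⬝ᵥ (M *ᵥ y) = ∑ i, ∑ j, x i * M i j * y j := by
      intro M
      simp [dotProduct, mulVec, Finset.mul_sum, mul_assoc]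
    simp only [e]
    exact tendsto_finset_sum _ fun i _ => tendsto_finset_sum _ fun j _ =>
      ((hentU i j).const_mul (x i)).mul_const (y j)
  have htracetend : Tendsto (fun m => ∑ i, Useq (ψ m) i i) atTop (𝓝 (∑ i, U i i)) :=
    tendsto_finset_sum _ fun i _ => hentU i i
  have hsymm : Uᵀ = U := by
    ext i j
    rw [transpose_apply]
    have hseq_eq : ∀ m, Useq (ψ m) j i = Useq (ψ m) i j := by
      intro m
      have := congrFun (congrFun (h1 (ψ m)) i) j
      rw [transpose_apply] at this
      exact this
    exact tendsto_nhds_unique ((hentU j i).congr hseq_eq) (hentU i j)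
  have hpsd : ∀ x, 0 ≤ x ⬝ᵥ (U *ᵥ x) :=
    fun x => ge_of_tendsto' (hquadtend x x) fun m => h2 (ψ m) x
  have hdiag1 : ∀ i, U i i ≤ 1 :=
    fun i => le_of_tendsto' (hentU i i) fun m => (h4 (ψ m) i).2
  have htrace : (n : ℝ) - k * (η / (η - 1)) ≤ ∑ i, U i i :=
    ge_of_tendsto' htracetend fun m => h5 (ψ m)
  have hsub : ∀ x, x ⬝ᵥ (U *ᵥ x) ≤ η * ∑ i, U i i * x i ^ 2 := by
    intro x
    have hrhs : Tendsto (fun m => η * ∑ i, Useq (ψ m) i i * x i ^ 2) atTop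
        (𝓝 (η * ∑ i, U i i * x i ^ 2)) :=
      (tendsto_finset_sum _ fun i _ => (hentU i i).mul_const (x i ^ 2)).const_mul η
    exact le_of_tendsto_of_tendsto' (hquadtend x x) hrhs fun m => h6 (ψ m) x
  have hann : ∀ v : Fin k → ℝ, (A *ᵥ v) ⬝ᵥ (U *ᵥ (A *ᵥ v)) = 0 := by
    intro v
    have hub : Tendsto (fun m => (1/((ψ m : ℝ)+1)) * (v ⬝ᵥ v)) atTop (𝓝 0) := by
      have h0 : Tendsto (fun m : ℕ => 1/((m : ℝ)+1)) atTop (𝓝 0) :=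
        tendsto_one_div_add_atTop_nhds_zero_nat
      have h1' : Tendsto (fun m => (1/((ψ m : ℝ)+1))) atTop (𝓝 0) :=
        h0.comp hψ.tendsto_atTop
      have := h1'.mul_const (v ⬝ᵥ v)
      rwa [zero_mul] at this
    have hle : (A *ᵥ v) ⬝ᵥ (U *ᵥ (A *ᵥ v)) ≤ 0 := by
      have := le_of_tendsto_of_tendsto' (hquadtend (A *ᵥ v) (A *ᵥ v)) hub
        fun m => h7 (ψ m) v
      simpa using this
    exact le_antisymm hle (hpsd _)
  exact ⟨U, hsymm, hpsd, hdiag1, htrace, hsub, hann⟩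

end Subiso

open Subiso

/-- **Existence of sub-isotropic covariance matrices (Theorem 2.4, Bansal–Garg).**
If `W ⊆ ℝⁿ` is a subspace with `dim(W) ≤ (1−δ)n`, `δ > 0`, and `a > 0`, `η > 1`
satisfy `1/η + a ≤ δ`, then there is a symmetric PSD matrix `U` with `wᵀUw = 0` for
all `w ∈ W`, `U_{ii} ≤ 1`, `Tr(U) ≥ a·n`, and `η·diag(U) − U ⪰ 0`. -/
theorem exists_subisotropic_covariance (n : ℕ) (W : Submodule ℝ (Fin n → ℝ))
    (δ : ℝ) (hδ : 0 < δ) (hdim : (Module.finrank ℝ W : ℝ) ≤ (1 - δ) * n)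
    (a η : ℝ) (ha : 0 < a) (hη : 1 < η) (hcond : 1 / η + a ≤ δ) :
    ∃ U : Matrix (Fin n) (Fin n) ℝ, U.PosSemidef ∧
      (∀ w ∈ W, w ⬝ᵥ (U *ᵥ w) = 0) ∧
      (∀ i, U i i ≤ 1) ∧
      a * n ≤ U.trace ∧
      (η • Matrix.diagonal (fun i => U i i) - U).PosSemidef := by
  classical
  have hη0 : (0:ℝ) < η := by linarith
  have hη1 : (0:ℝ) < η - 1 := by linarith
  set k := Module.finrank ℝ W with hk
  let b : Module.Basis (Fin k) ℝ W := Module.finBasis ℝ W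
  set A : Matrix (Fin n) (Fin k) ℝ := Matrix.of (fun i j => ((b j : Fin n → ℝ) i)) with hA
  obtain ⟨U, hsymm, hpsd, hdiag, htr, hsub, hann⟩ := Subiso.exists_U A hη
  have hstar : ∀ x : Fin n → ℝ, star x = x := fun x => funext fun i => star_trivial _
  refine ⟨U, posSemidef_iff_dotProduct_mulVec.2 ⟨?_, ?_⟩, ?_, hdiag, ?_, posSemidef_iff_dotProduct_mulVec.2 ⟨?_, ?_⟩⟩
  · show Uᴴ = U
    rw [conjTranspose_eq_transpose_of_trivial, hsymm]
  · intro x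
    rw [hstar x]
    exact hpsd x
  · intro w hw
    set v : Fin k → ℝ := fun j => b.repr ⟨w, hw⟩ j with hv
    have hAv : A *ᵥ v = w := by
      have hsum := b.sum_repr ⟨w, hw⟩
      have hcoe : ((∑ j, b.repr ⟨w, hw⟩ j • b j : W) : Fin n → ℝ) = w := by
        rw [hsum]
      ext i
      have h1 : (A *ᵥ v) i = ∑ j, (b j : Fin n → ℝ) i * v j := by
        simp [mulVec, dotProduct, hA]
      have h2 : w i = ∑ j, v j * (b j : Fin n → ℝ) i := by
        conv_lhs => rw [← hcoe]
        rw [AddSubmonoidClass.coe_finset_sum, Finset.sum_apply]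
        refine Finset.sum_congr rfl fun j _ => ?_
        rw [SetLike.val_smul, Pi.smul_apply, smul_eq_mul, hv]
      rw [h1, h2]
      exact Finset.sum_congr rfl fun j _ => by ring
    have h0 := hann v
    rwa [hAv] at h0
  · -- trace bound
    have htr_eq : U.trace = ∑ i, U i i := rfl
    have hn0 : (0:ℝ) ≤ n := Nat.cast_nonneg n
    have hδle : (1:ℝ) - δ ≤ 1 - 1/η - a := by linarith
    have hk2 : (k:ℝ) ≤ (1 - 1/η - a) * n :=
      le_trans hdim (mul_le_mul_of_nonneg_right hδle hn0)
    have hkη : (k:ℝ) * η ≤ (η - 1 - a*η) * n := by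
      have h1 := mul_le_mul_of_nonneg_right hk2 (le_of_lt hη0)
      have hinv : 1/η * η = 1 := by field_simp
      have hident : (1 - 1/η - a) * n * η = (η - 1 - a*η) * n := by
        linear_combination (-(n:ℝ)) * hinv
      linarith
    have h5 : (k:ℝ)*η ≤ (n - a*n)*(η-1) := by nlinarith [mul_nonneg (le_of_lt ha) hn0]
    have h6 : (k:ℝ)*(η/(η-1)) ≤ (n:ℝ) - a*n := by
      have e : (k:ℝ)*(η/(η-1)) = (k:ℝ)*η/(η-1) := by ring
      rw [e, div_le_iff₀ hη1]
      exact h5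
    rw [htr_eq]
    linarith [htr]
  · show (η • Matrix.diagonal (fun i => U i i) - U)ᴴ = _
    rw [conjTranspose_eq_transpose_of_trivial, transpose_sub, transpose_smul,
      diagonal_transpose, hsymm]
  · intro x
    rw [hstar x]
    have hexp : x ⬝ᵥ ((η • Matrix.diagonal (fun i => U i i) - U) *ᵥ x)
        = η * (∑ i, U i i * x i ^ 2) - x ⬝ᵥ (U *ᵥ x) := by
      rw [sub_mulVec, dotProduct_sub, smul_mulVec, dotProduct_smul, smul_eq_mul]
      congr 2
      simp only [dotProduct, mulVec_diagonal]
      exact Finset.sum_congr rfl fun i _ => by ring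
    rw [hexp]
    have := hsub x
    linarith
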